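/- Let u^{(0)},…,u^{(d-1)} be functions on {1,…,d} with u^{(0)} ≡ 1 satisfying ∑_{i=1}^d u_i^{(l)} u_i^{(m)} p_i = a_l δ_{lm}. Define Q_n(x;u) as the coefficient of w_1^{n_1}⋯w_{d-1}^{n_{d-1}} in G(x,w,u) = ∏_{j=1}^d (1 + ∑_{l=1}^{d-1} w_l u_j^{(l)})^{x_j}. Then ∑_{|x|=N} Q_m(x;u) Q_n(x;u) m(x;p) = δ_{mn} multinomial(N; n_0,n_1,…,n_{d-1}) ∏_{j=1}^{d-1} a_j^{n_j}, where n_0 = N - ∑_{j=1}^{d-1} n_j and m(x;p) is the multinomial probability. -/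

import Mathlib

open MvPolynomial

/-- Multinomial probability `m(x;p)` (when `|x| = N`). -/
noncomputable def multinomialPMF (d : ℕ) (p : Fin d → ℝ) (x : Fin d → ℕ) : ℝ :=
  (Nat.multinomial Finset.univ x : ℝ) * ∏ j, p j ^ x j

/-- Multivariate Krawtchouk polynomial `Q_n(x;u)`: the coefficient of
`∏_{l≠0} w_l^{n_l}` in `∏_j (1 + ∑_{l≠0} w_l u^{(l)}_j)^{x_j}`. -/
noncomputable def QK (d : ℕ) [NeZero d] (u : Fin d → Fin d → ℝ) (n x : Fin d → ℕ) : ℝ :=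
  MvPolynomial.coeff (Finsupp.equivFunOnFinite.symm n)
    (∏ j, (1 + ∑ l ∈ Finset.univ.erase 0, MvPolynomial.X l * MvPolynomial.C (u l j)) ^ x j)

open Finset

section Aux

variable {d : ℕ} [NeZero d]

private theorem key1 (p : Fin d → ℝ) (hpsum : ∑ j, p j = 1)
    (u : Fin d → Fin d → ℝ) (hu0 : ∀ j, u 0 j = 1)
    (a : Fin d → ℝ)
    (horth : ∀ l m, ∑ i, u l i * u m i * p i = if l = m then a l else 0) :
    (∑ j : Fin d, C (C (p j)) *
        ((1 + ∑ l ∈ Finset.univ.erase 0, X l * C (C (u l j))) *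
         (1 + ∑ l ∈ Finset.univ.erase 0, C (X l) * C (C (u l j)))) :
        MvPolynomial (Fin d) (MvPolynomial (Fin d) ℝ)) =
      1 + ∑ l ∈ Finset.univ.erase 0, X l * C (X l * C (a l)) := by
  set S := Finset.univ.erase (0 : Fin d) with hS
  have h0 : ∀ l ∈ S, ∑ j, u l j * p j = 0 := by
    intro l hl
    have := horth l 0
    rw [if_neg (Finset.ne_of_mem_erase hl)] at this
    simpa [hu0] using this
  have expand : ∀ j : Fin d, (C (C (p j)) *
      ((1 + ∑ l ∈ S, X l * C (C (u l j))) * (1 + ∑ l ∈ S, C (X l) * C (C (u l j)))) :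
        MvPolynomial (Fin d) (MvPolynomial (Fin d) ℝ)) =
      C (C (p j)) + ((∑ l ∈ S, C (C (p j)) * (X l * C (C (u l j)))) +
        ((∑ l ∈ S, C (C (p j)) * (C (X l) * C (C (u l j)))) +
         (∑ l ∈ S, ∑ l' ∈ S, C (C (p j)) *
            ((X l * C (C (u l j))) * (C (X l') * C (C (u l' j))))))) := by
    intro j
    rw [show ((1 + ∑ l ∈ S, X l * C (C (u l j))) * (1 + ∑ l ∈ S, C (X l) * C (C (u l j))) :
        MvPolynomial (Fin d) (MvPolynomial (Fin d) ℝ)) =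
        1 + ((∑ l ∈ S, X l * C (C (u l j))) + ((∑ l ∈ S, C (X l) * C (C (u l j))) +
          (∑ l ∈ S, X l * C (C (u l j))) * (∑ l ∈ S, C (X l) * C (C (u l j))))) from by ring,
      Finset.sum_mul_sum, mul_add, mul_one, mul_add, mul_add, Finset.mul_sum, Finset.mul_sum,
      Finset.mul_sum]
    simp_rw [Finset.mul_sum]
  simp_rw [expand, Finset.sum_add_distrib]
  have t1 : (∑ j : Fin d, (C (C (p j)) : MvPolynomial (Fin d) (MvPolynomial (Fin d) ℝ))) = 1 := by
    rw [← map_sum, ← map_sum, hpsum, map_one, map_one]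
  have inner1 : ∀ l ∈ S, (∑ j : Fin d, C (C (p j)) * (X l * C (C (u l j))) :
      MvPolynomial (Fin d) (MvPolynomial (Fin d) ℝ)) = 0 := by
    intro l hl
    have : (∑ j : Fin d, C (C (p j)) * (X l * C (C (u l j))) :
        MvPolynomial (Fin d) (MvPolynomial (Fin d) ℝ)) = X l * C (C (∑ j, u l j * p j)) := by
      simp only [map_sum, map_mul, Finset.mul_sum]
      refine Finset.sum_congr rfl fun j _ => by ring
    rw [this, h0 l hl]; simp
  have inner2 : ∀ l ∈ S, (∑ j : Fin d, C (C (p j)) * (C (X l) * C (C (u l j))) :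
      MvPolynomial (Fin d) (MvPolynomial (Fin d) ℝ)) = 0 := by
    intro l hl
    have : (∑ j : Fin d, C (C (p j)) * (C (X l) * C (C (u l j))) :
        MvPolynomial (Fin d) (MvPolynomial (Fin d) ℝ)) = C (X l) * C (C (∑ j, u l j * p j)) := by
      simp only [map_sum, map_mul, Finset.mul_sum]
      refine Finset.sum_congr rfl fun j _ => by ring
    rw [this, h0 l hl]; simp
  have t2 : (∑ j : Fin d, ∑ l ∈ S, C (C (p j)) * (X l * C (C (u l j))) :
      MvPolynomial (Fin d) (MvPolynomial (Fin d) ℝ)) = 0 := by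
    rw [Finset.sum_comm]
    exact Finset.sum_eq_zero inner1
  have t3 : (∑ j : Fin d, ∑ l ∈ S, C (C (p j)) * (C (X l) * C (C (u l j))) :
      MvPolynomial (Fin d) (MvPolynomial (Fin d) ℝ)) = 0 := by
    rw [Finset.sum_comm]
    exact Finset.sum_eq_zero inner2
  have t4 : (∑ j : Fin d, ∑ l ∈ S, ∑ l' ∈ S,
      C (C (p j)) * ((X l * C (C (u l j))) * (C (X l') * C (C (u l' j)))) :
      MvPolynomial (Fin d) (MvPolynomial (Fin d) ℝ)) =
      ∑ l ∈ S, X l * C (X l * C (a l)) := by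
    rw [Finset.sum_comm]
    refine Finset.sum_congr rfl fun l hl => ?_
    rw [Finset.sum_comm]
    have step : ∀ l' ∈ S, (∑ j : Fin d,
        C (C (p j)) * ((X l * C (C (u l j))) * (C (X l') * C (C (u l' j)))) :
        MvPolynomial (Fin d) (MvPolynomial (Fin d) ℝ)) =
        if l = l' then X l * C (X l * C (a l)) else 0 := by
      intro l' _
      have : (∑ j : Fin d,
          C (C (p j)) * ((X l * C (C (u l j))) * (C (X l') * C (C (u l' j)))) :
          MvPolynomial (Fin d) (MvPolynomial (Fin d) ℝ)) =
          X l * (C (X l') * C (C (∑ j, u l j * u l' j * p j))) := by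
        simp only [map_sum, map_mul, Finset.mul_sum]
        refine Finset.sum_congr rfl fun j _ => by ring
      rw [this, horth l l']
      split_ifs with h
      · subst h; rw [map_mul]
      · simp
    rw [Finset.sum_congr rfl step, Finset.sum_ite_eq S l (fun _ => X l * C (X l * C (a l))),
      if_pos hl]
  rw [t1, t2, t3, t4]
  simp

private theorem prodXpow {R : Type*} [CommSemiring R] (y : Fin d → ℕ) :
    (∏ l ∈ Finset.univ.erase 0, (X l : MvPolynomial (Fin d) R) ^ y l) =
      monomial (Finsupp.equivFunOnFinite.symm (fun l => if l = 0 then 0 else y l)) 1 := by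
  rw [monic_monomial_eq, Finsupp.prod_fintype _ _ (fun i => pow_zero _),
    ← Finset.mul_prod_erase univ
      (fun l => (X l : MvPolynomial (Fin d) R) ^ (Finsupp.equivFunOnFinite.symm
        (fun l => if l = 0 then 0 else y l)) l) (mem_univ (0 : Fin d))]
  simp only [Finsupp.coe_equivFunOnFinite_symm, if_true, eq_self_iff_true, pow_zero,
    one_mul]
  refine Finset.prod_congr rfl fun l hl => ?_
  rw [if_neg (Finset.ne_of_mem_erase hl)]

end Aux

/-- Orthogonality of the multivariate Krawtchouk polynomials on the multinomial
distribution. -/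
theorem multivariate_krawtchouk_orthogonality
    (d N : ℕ) [NeZero d] (hd : 2 ≤ d)
    (p : Fin d → ℝ) (hp : ∀ j, 0 < p j) (hpsum : ∑ j, p j = 1)
    (u : Fin d → Fin d → ℝ) (hu0 : ∀ j, u 0 j = 1)
    (a : Fin d → ℝ) (ha : ∀ l, 0 < a l)
    (horth : ∀ l m, ∑ i, u l i * u m i * p i = if l = m then a l else 0)
    (m n : Fin d → ℕ) (hm0 : m 0 = 0) (hn0 : n 0 = 0)
    (hm : ∑ j, m j ≤ N) (hn : ∑ j, n j ≤ N) :
    ∑ x ∈ Finset.Nat.antidiagonalTuple d N,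
        QK d u m x * QK d u n x * multinomialPMF d p x =
      if m = n then
        (Nat.multinomial Finset.univ
            (fun j => if j = 0 then N - ∑ i, n i else n j) : ℝ) *
          ∏ j ∈ Finset.univ.erase 0, a j ^ n j
      else 0 := by
  classical
  set S := Finset.univ.erase (0 : Fin d) with hS
  set mS := Finsupp.equivFunOnFinite.symm m with hmS
  set nS := Finsupp.equivFunOnFinite.symm n with hnS
  set g : Fin d → MvPolynomial (Fin d) ℝ :=
    fun j => 1 + ∑ l ∈ S, X l * C (u l j) with hg
  have hQK : ∀ (k x : Fin d → ℕ), QK d u k x =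
      coeff (Finsupp.equivFunOnFinite.symm k) (∏ j, g j ^ x j) := fun k x => rfl
  -- the two generating polynomials over `B := MvPolynomial (Fin d) (MvPolynomial (Fin d) ℝ)`
  have hgmap : ∀ j, (map (C : ℝ →+* MvPolynomial (Fin d) ℝ) (g j)) =
      1 + ∑ l ∈ S, X l * C (C (u l j)) := by
    intro j; simp [hg]
  have hgC : ∀ j, (C (g j) : MvPolynomial (Fin d) (MvPolynomial (Fin d) ℝ)) =
      1 + ∑ l ∈ S, C (X l) * C (C (u l j)) := by
    intro j; simp [hg, map_sum]
  -- master identity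
  have key2 : (∑ x ∈ piAntidiag univ N,
      (Nat.multinomial univ x : MvPolynomial (Fin d) (MvPolynomial (Fin d) ℝ)) *
        ∏ j, (C (C (p j)) * (MvPolynomial.map (C : ℝ →+* MvPolynomial (Fin d) ℝ) (g j) * C (g j))) ^ x j) =
      (1 + ∑ l ∈ S, X l * C (X l * C (a l))) ^ N := by
    simp_rw [hgmap, hgC]
    rw [← key1 p hpsum u hu0 a horth]
    exact (Finset.sum_pow_eq_sum_piAntidiag univ _ N).symm
  -- per-term LHS coefficient computation
  have hprod : ∀ x : Fin d → ℕ,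
      (∏ j, (C (C (p j)) *
          (MvPolynomial.map (C : ℝ →+* MvPolynomial (Fin d) ℝ) (g j) * C (g j))) ^ x j) =
        C (C (∏ j, p j ^ x j)) *
          (C (∏ j, g j ^ x j) *
            MvPolynomial.map (C : ℝ →+* MvPolynomial (Fin d) ℝ) (∏ j, g j ^ x j)) := by
    intro x
    simp only [mul_pow, Finset.prod_mul_distrib, map_prod, map_pow]
    ring
  have lhs_terms : ∀ x : Fin d → ℕ,
      coeff nS (coeff mS ((Nat.multinomial univ x : MvPolynomial (Fin d) (MvPolynomial (Fin d) ℝ)) *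
        ∏ j, (C (C (p j)) *
          (MvPolynomial.map (C : ℝ →+* MvPolynomial (Fin d) ℝ) (g j) * C (g j))) ^ x j)) =
      QK d u m x * QK d u n x * multinomialPMF d p x := by
    intro x
    rw [hprod x,
      show ((Nat.multinomial univ x : ℕ) : MvPolynomial (Fin d) (MvPolynomial (Fin d) ℝ)) =
        C (C ((Nat.multinomial univ x : ℕ) : ℝ)) from by rw [map_natCast, map_natCast]]
    simp only [coeff_C_mul, coeff_map]
    rw [mul_comm (∏ j, g j ^ x j) (C (coeff mS (∏ j, g j ^ x j)))]
    simp only [coeff_C_mul]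
    rw [hQK m x, hQK n x, multinomialPMF]
    ring
  have Lside : coeff nS (coeff mS (∑ x ∈ piAntidiag univ N,
      (Nat.multinomial univ x : MvPolynomial (Fin d) (MvPolynomial (Fin d) ℝ)) *
        ∏ j, (C (C (p j)) *
          (MvPolynomial.map (C : ℝ →+* MvPolynomial (Fin d) ℝ) (g j) * C (g j))) ^ x j)) =
      ∑ x ∈ piAntidiag univ N, QK d u m x * QK d u n x * multinomialPMF d p x := by
    simp only [coeff_sum]
    exact Finset.sum_congr rfl fun x _ => lhs_terms x
  -- RHS coefficient computation
  have hcsum : (1 + ∑ l ∈ S, X l * C (X l * C (a l)) :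
      MvPolynomial (Fin d) (MvPolynomial (Fin d) ℝ)) =
      ∑ l : Fin d, (if l = 0 then 1 else X l * C (X l * C (a l))) := by
    rw [← Finset.add_sum_erase univ
      (fun l => if l = (0 : Fin d) then (1 : MvPolynomial (Fin d) (MvPolynomial (Fin d) ℝ))
        else X l * C (X l * C (a l))) (mem_univ 0), if_pos rfl]
    congr 1
    exact Finset.sum_congr rfl fun l hl => (if_neg (Finset.ne_of_mem_erase hl)).symm
  have hprodc : ∀ y : Fin d → ℕ,
      (∏ l, (if l = (0 : Fin d) then (1 : MvPolynomial (Fin d) (MvPolynomial (Fin d) ℝ))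
          else X l * C (X l * C (a l))) ^ y l) =
        monomial (Finsupp.equivFunOnFinite.symm (fun l => if l = 0 then 0 else y l))
            (1 : MvPolynomial (Fin d) ℝ) *
          C (monomial (Finsupp.equivFunOnFinite.symm (fun l => if l = 0 then 0 else y l))
              (∏ l ∈ S, a l ^ y l)) := by
    intro y
    have e1 : (∏ l ∈ univ.erase 0, (if l = (0 : Fin d) then
            (1 : MvPolynomial (Fin d) (MvPolynomial (Fin d) ℝ))
          else X l * C (X l * C (a l))) ^ y l) =
        ∏ l ∈ univ.erase 0, (X l * C (X l * C (a l))) ^ y l :=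
      Finset.prod_congr rfl fun l hl => by rw [if_neg (Finset.ne_of_mem_erase hl)]
    rw [← Finset.mul_prod_erase univ _ (mem_univ (0 : Fin d)), if_pos rfl, one_pow, one_mul, e1]
    simp only [mul_pow, Finset.prod_mul_distrib, ← map_pow, ← map_prod]
    rw [prodXpow, prodXpow]
    rw [C_apply (a := (monomial (Finsupp.equivFunOnFinite.symm fun l => if l = 0 then 0 else y l))
        (∏ x ∈ S, a x ^ y x)), monomial_mul, add_zero, one_mul, C_apply, monomial_mul, add_zero,
      one_mul]
    congr 1
    rw [mul_comm, C_mul_monomial, mul_one]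
  have rhs_terms : ∀ y : Fin d → ℕ,
      coeff nS (coeff mS ((Nat.multinomial univ y : MvPolynomial (Fin d) (MvPolynomial (Fin d) ℝ)) *
        ∏ l, (if l = (0 : Fin d) then (1 : MvPolynomial (Fin d) (MvPolynomial (Fin d) ℝ))
          else X l * C (X l * C (a l))) ^ y l)) =
      if Finsupp.equivFunOnFinite.symm (fun l => if l = 0 then 0 else y l) = mS then
        (if Finsupp.equivFunOnFinite.symm (fun l => if l = 0 then 0 else y l) = nS then
          ((Nat.multinomial univ y : ℝ) * ∏ l ∈ S, a l ^ y l) else 0)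
      else 0 := by
    intro y
    rw [hprodc y,
      show ((Nat.multinomial univ y : ℕ) : MvPolynomial (Fin d) (MvPolynomial (Fin d) ℝ)) =
        C ((Nat.multinomial univ y : ℕ) : MvPolynomial (Fin d) ℝ) from (map_natCast C _).symm,
      coeff_C_mul,
      mul_comm (monomial (Finsupp.equivFunOnFinite.symm fun l => if l = 0 then 0 else y l)
          (1 : MvPolynomial (Fin d) ℝ))
        (C (monomial (Finsupp.equivFunOnFinite.symm fun l => if l = 0 then 0 else y l)
          (∏ l ∈ S, a l ^ y l))),
      coeff_C_mul, coeff_monomial, mul_ite, mul_one, mul_zero, mul_ite, mul_zero,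
      apply_ite (coeff nS), coeff_zero,
      show ((Nat.multinomial univ y : ℕ) : MvPolynomial (Fin d) ℝ) =
        C ((Nat.multinomial univ y : ℕ) : ℝ) from (map_natCast C _).symm,
      coeff_C_mul, coeff_monomial, mul_ite, mul_zero]
  have Rside : coeff nS (coeff mS ((1 + ∑ l ∈ S, X l * C (X l * C (a l)) :
      MvPolynomial (Fin d) (MvPolynomial (Fin d) ℝ)) ^ N)) =
      if m = n then
        (Nat.multinomial Finset.univ
            (fun j => if j = 0 then N - ∑ i, n i else n j) : ℝ) *
          ∏ j ∈ Finset.univ.erase 0, a j ^ n j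
      else 0 := by
    rw [hcsum, Finset.sum_pow_eq_sum_piAntidiag]
    simp only [coeff_sum]
    rw [Finset.sum_congr rfl fun y _ => rhs_terms y]
    by_cases hmn : m = n
    · subst hmn
      rw [if_pos rfl]
      refine (Finset.sum_eq_single_of_mem
        (fun j => if j = (0 : Fin d) then N - ∑ i, m i else m j) ?_ ?_).trans ?_
      · rw [mem_piAntidiag]
        refine ⟨?_, fun i _ => mem_univ i⟩
        rw [← Finset.add_sum_erase univ _ (mem_univ (0 : Fin d)), if_pos rfl]
        have e2 : ∑ j ∈ univ.erase (0 : Fin d),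
            (if j = (0 : Fin d) then N - ∑ i, m i else m j) = ∑ j, m j := by
          rw [Finset.sum_congr rfl fun j hj => if_neg (Finset.ne_of_mem_erase hj)]
          exact Finset.sum_erase _ hm0
        rw [e2]
        exact Nat.sub_add_cancel hm
      · intro y hy hne
        split_ifs with h1
        · exfalso
          apply hne
          have hyr : (fun l => if l = (0 : Fin d) then 0 else y l) = m :=
            Finsupp.equivFunOnFinite.symm.injective h1
          have hsum : ∑ j, y j = N := (mem_piAntidiag.mp hy).1
          have e3 : ∑ j ∈ univ.erase (0 : Fin d), y j = ∑ j, m j := by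
            have e3' : ∀ j ∈ univ.erase (0 : Fin d), y j = m j := by
              intro j hj
              have h := congrFun hyr j
              rwa [if_neg (Finset.ne_of_mem_erase hj)] at h
            rw [Finset.sum_congr rfl e3']
            exact Finset.sum_erase _ hm0
          have e4 : y 0 + ∑ j ∈ univ.erase (0 : Fin d), y j = N := by
            rw [Finset.add_sum_erase _ _ (mem_univ 0)]
            exact hsum
          funext j
          by_cases hj : j = 0
          · subst hj
            rw [if_pos rfl]
            rw [e3] at e4
            omega
          · have h := congrFun hyr j
            rw [if_neg hj] at h
            rw [if_neg hj, h]
        · rfl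
      · have hyr : (fun l => if l = (0 : Fin d) then 0 else
            (if l = (0 : Fin d) then N - ∑ i, m i else m l)) = m := by
          funext j
          by_cases hj : j = 0
          · subst hj
            rw [if_pos rfl, hm0]
          · rw [if_neg hj, if_neg hj]
        have hcond : Finsupp.equivFunOnFinite.symm (fun l => if l = (0 : Fin d) then 0 else
            (if l = (0 : Fin d) then N - ∑ i, m i else m l)) = mS := by
          rw [hyr, hmS]
        rw [if_pos hcond, if_pos hcond]
        congr 1
        refine Finset.prod_congr rfl fun l hl => ?_
        show a l ^ (if l = (0 : Fin d) then N - ∑ i, m i else m l) = a l ^ m l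
        rw [if_neg (Finset.ne_of_mem_erase hl)]
    · rw [if_neg hmn]
      apply Finset.sum_eq_zero
      intro y _
      split_ifs with h1 h2
      · exact absurd (Finsupp.equivFunOnFinite.symm.injective (h1.symm.trans h2)) hmn
      · rfl
      · rfl
  rw [← Finset.piAntidiag_univ_fin_eq_antidiagonalTuple, ← Lside, key2, Rside]
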